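/- The map Σ ↦ Fᵀ R̃(Σ)⁻¹ F is operator convex on positive semidefinite matrices: for all α ∈ [0,1] and all positive semidefinite Σ₁, Σ₂, one has Fᵀ R̃(αΣ₁ + (1−α)Σ₂)⁻¹ F ⪯ α Fᵀ R̃(Σ₁)⁻¹ F + (1−α) Fᵀ R̃(Σ₂)⁻¹ F. -/

import Mathlib

open Matrix BigOperators

noncomputable section

/-- `R̃(Σ) = C (A Σ Aᵀ + Q) Cᵀ + R`. -/
def Rt {ny nz : ℕ} (A Q : Matrix (Fin ny) (Fin ny) ℝ)
    (C : Matrix (Fin nz) (Fin ny) ℝ) (R : Matrix (Fin nz) (Fin nz) ℝ)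
    (S : Matrix (Fin ny) (Fin ny) ℝ) : Matrix (Fin nz) (Fin nz) ℝ :=
  C * (A * S * Aᵀ + Q) * Cᵀ + R

/-- Optimal unknown-input filter gain `M(Σ)`. -/
def Mg {ny nz nd : ℕ} (A Q : Matrix (Fin ny) (Fin ny) ℝ) (G : Matrix (Fin ny) (Fin nd) ℝ)
    (C : Matrix (Fin nz) (Fin ny) ℝ) (R : Matrix (Fin nz) (Fin nz) ℝ)
    (S : Matrix (Fin ny) (Fin ny) ℝ) : Matrix (Fin nd) (Fin nz) ℝ :=
  ((C * G)ᵀ * (Rt A Q C R S)⁻¹ * (C * G))⁻¹ * (C * G)ᵀ * (Rt A Q C R S)⁻¹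

/-- Optimal state filter gain `K(Σ)`. -/
def Kg {ny nz : ℕ} (A Q : Matrix (Fin ny) (Fin ny) ℝ)
    (C : Matrix (Fin nz) (Fin ny) ℝ) (R : Matrix (Fin nz) (Fin nz) ℝ)
    (S : Matrix (Fin ny) (Fin ny) ℝ) : Matrix (Fin ny) (Fin nz) ℝ :=
  (A * S * Aᵀ + Q) * Cᵀ * (Rt A Q C R S)⁻¹

/-- Closed loop matrix `Ã(Σ)`. -/
def Atil {ny nz nd : ℕ} (A Q : Matrix (Fin ny) (Fin ny) ℝ) (G : Matrix (Fin ny) (Fin nd) ℝ)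
    (C : Matrix (Fin nz) (Fin ny) ℝ) (R : Matrix (Fin nz) (Fin nz) ℝ)
    (S : Matrix (Fin ny) (Fin ny) ℝ) : Matrix (Fin ny) (Fin ny) ℝ :=
  (1 - Kg A Q C R S * C) * (1 - G * Mg A Q G C R S * C) * A

/-- `F̃(Σ)`. -/
def Ftil {ny nz nd : ℕ} (A Q : Matrix (Fin ny) (Fin ny) ℝ) (G : Matrix (Fin ny) (Fin nd) ℝ)
    (C : Matrix (Fin nz) (Fin ny) ℝ) (R : Matrix (Fin nz) (Fin nz) ℝ)
    (S : Matrix (Fin ny) (Fin ny) ℝ) : Matrix (Fin ny) (Fin ny) ℝ :=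
  -((1 - Kg A Q C R S * C) * (1 - G * Mg A Q G C R S * C))

/-- `W̃(Σ)`. -/
def Wtil {ny nz nd : ℕ} (A Q : Matrix (Fin ny) (Fin ny) ℝ) (G : Matrix (Fin ny) (Fin nd) ℝ)
    (C : Matrix (Fin nz) (Fin ny) ℝ) (R : Matrix (Fin nz) (Fin nz) ℝ)
    (S : Matrix (Fin ny) (Fin ny) ℝ) : Matrix (Fin ny) (Fin nz) ℝ :=
  G * Mg A Q G C R S - Kg A Q C R S * C * G * Mg A Q G C R S + Kg A Q C R S

/-- The state error covariance update map `ρ(Σ)`. -/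
def rho {ny nz nd : ℕ} (A Q : Matrix (Fin ny) (Fin ny) ℝ) (G : Matrix (Fin ny) (Fin nd) ℝ)
    (C : Matrix (Fin nz) (Fin ny) ℝ) (R : Matrix (Fin nz) (Fin nz) ℝ)
    (S : Matrix (Fin ny) (Fin ny) ℝ) : Matrix (Fin ny) (Fin ny) ℝ :=
  Atil A Q G C R S * S * (Atil A Q G C R S)ᵀ
    + Ftil A Q G C R S * Q * (Ftil A Q G C R S)ᵀ
    + Wtil A Q G C R S * R * (Wtil A Q G C R S)ᵀ

/-- The unknown-input error covariance update map `ρᵈ(Σ)`. -/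
def rhod {ny nz nd : ℕ} (A Q : Matrix (Fin ny) (Fin ny) ℝ) (G : Matrix (Fin ny) (Fin nd) ℝ)
    (C : Matrix (Fin nz) (Fin ny) ℝ) (R : Matrix (Fin nz) (Fin nz) ℝ)
    (S : Matrix (Fin ny) (Fin ny) ℝ) : Matrix (Fin nd) (Fin nd) ℝ :=
  ((C * G)ᵀ * (Rt A Q C R S)⁻¹ * (C * G))⁻¹


section Aux

open Matrix

lemma psd_smul {m : Type*} [Fintype m] {c : ℝ} (hc : 0 ≤ c)
    {M : Matrix m m ℝ} (hM : M.PosSemidef) :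
    (c • M).PosSemidef := by
  refine PosSemidef.of_dotProduct_mulVec_nonneg ?_ (fun x => ?_)
  · unfold Matrix.IsHermitian
    rw [conjTranspose_smul, hM.1]
    simp
  · rw [Matrix.smul_mulVec, dotProduct_smul, smul_eq_mul]
    exact mul_nonneg hc (hM.dotProduct_mulVec_nonneg x)

lemma pd_smul {m : Type*} [Fintype m] {c : ℝ} (hc : 0 < c) {M : Matrix m m ℝ} (hM : M.PosDef) :
    (c • M).PosDef := by
  refine PosDef.of_dotProduct_mulVec_pos (psd_smul hc.le hM.posSemidef).1 (fun x hx => ?_)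
  rw [Matrix.smul_mulVec, dotProduct_smul, smul_eq_mul]
  exact mul_pos hc (hM.dotProduct_mulVec_pos hx)

lemma psd_conj {m n : Type*} [Fintype m] [Fintype n] {M : Matrix m m ℝ} (hM : M.PosSemidef) (B : Matrix n m ℝ) :
    (B * M * Bᵀ).PosSemidef := by
  have := hM.mul_mul_conjTranspose_same B
  rwa [conjTranspose_eq_transpose_of_trivial] at this

lemma convex_comb_pd {m : Type*} [Fintype m] {X Y : Matrix m m ℝ} (hX : X.PosDef) (hY : Y.PosDef)
    {α : ℝ} (h0 : 0 ≤ α) (h1 : α ≤ 1) : (α • X + (1 - α) • Y).PosDef := by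
  rcases lt_or_eq_of_le h1 with h | h
  · exact (psd_smul h0 hX.posSemidef) |> (fun h => Matrix.PosDef.posSemidef_add h (pd_smul (by linarith) hY))
  · subst h; simpa using hX

lemma inv_congr_convex {m n : Type*} [Fintype m] [DecidableEq m] [Fintype n] (X Y : Matrix m m ℝ) (F : Matrix m n ℝ)
    (hX : X.PosDef) (hY : Y.PosDef) {α : ℝ} (h0 : 0 ≤ α) (h1 : α ≤ 1) :
    (α • (Fᵀ * X⁻¹ * F) + (1 - α) • (Fᵀ * Y⁻¹ * F)
      - Fᵀ * (α • X + (1 - α) • Y)⁻¹ * F).PosSemidef := by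
  have hZ : (α • X + (1 - α) • Y).PosDef := convex_comb_pd hX hY h0 h1
  haveI := hX.isUnit.invertible
  haveI := hY.isUnit.invertible
  haveI := hZ.isUnit.invertible
  have hFt : ∀ (W : Matrix m n ℝ), Wᴴ = Wᵀ := fun W =>
    conjTranspose_eq_transpose_of_trivial W
  have hMX : (fromBlocks X F Fᴴ (Fᵀ * X⁻¹ * F)).PosSemidef := by
    rw [PosDef.fromBlocks₁₁ F _ hX, hFt]
    simpa using PosSemidef.zero
  have hMY : (fromBlocks Y F Fᴴ (Fᵀ * Y⁻¹ * F)).PosSemidef := by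
    rw [PosDef.fromBlocks₁₁ F _ hY, hFt]
    simpa using PosSemidef.zero
  have hsum := (psd_smul h0 hMX).add (psd_smul (by linarith : (0:ℝ) ≤ 1 - α) hMY)
  rw [fromBlocks_smul, fromBlocks_smul, fromBlocks_add] at hsum
  have hF : α • F + (1 - α) • F = F := by rw [← add_smul]; ring_nf; simp
  have hFH : α • Fᴴ + (1 - α) • Fᴴ = Fᴴ := by rw [← add_smul]; ring_nf; simp
  rw [hF, hFH] at hsum
  rw [PosDef.fromBlocks₁₁ F _ hZ, hFt] at hsum
  exact hsum

lemma Rt_posDef {ny nz : ℕ} {A Q : Matrix (Fin ny) (Fin ny) ℝ}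
    {C : Matrix (Fin nz) (Fin ny) ℝ} {R : Matrix (Fin nz) (Fin nz) ℝ}
    (hQ : Q.PosDef) (hR : R.PosDef) {S : Matrix (Fin ny) (Fin ny) ℝ}
    (hS : S.PosSemidef) : (Rt A Q C R S).PosDef := by
  unfold Rt
  have h1 : (A * S * Aᵀ).PosSemidef := psd_conj hS A
  have h2 : (A * S * Aᵀ + Q).PosSemidef := (Matrix.PosDef.posSemidef_add h1 hQ).posSemidef
  exact Matrix.PosDef.posSemidef_add (psd_conj h2 C) hR

lemma Rt_affine {ny nz : ℕ} (A Q : Matrix (Fin ny) (Fin ny) ℝ)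
    (C : Matrix (Fin nz) (Fin ny) ℝ) (R : Matrix (Fin nz) (Fin nz) ℝ)
    (S1 S2 : Matrix (Fin ny) (Fin ny) ℝ) (α : ℝ) :
    Rt A Q C R (α • S1 + (1 - α) • S2)
      = α • Rt A Q C R S1 + (1 - α) • Rt A Q C R S2 := by
  unfold Rt
  simp only [Matrix.mul_add, Matrix.add_mul, Matrix.mul_smul, Matrix.smul_mul, smul_add]
  module

end Aux

/-- the map `Σ ↦ Fᵀ R̃(Σ)⁻¹ F` (with `F = C·G`) is operator convex
on PSD matrices: for `α ∈ [0,1]` and PSD `Σ₁, Σ₂`,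
`Fᵀ R̃(αΣ₁ + (1−α)Σ₂)⁻¹ F ⪯ α Fᵀ R̃(Σ₁)⁻¹ F + (1−α) Fᵀ R̃(Σ₂)⁻¹ F`. -/
theorem info_matrix_operator_convex {ny nz nd : ℕ}
    (A Q : Matrix (Fin ny) (Fin ny) ℝ) (G : Matrix (Fin ny) (Fin nd) ℝ)
    (C : Matrix (Fin nz) (Fin ny) ℝ) (R : Matrix (Fin nz) (Fin nz) ℝ)
    (hQ : Q.PosDef) (hR : R.PosDef)
    (α : ℝ) (hα0 : 0 ≤ α) (hα1 : α ≤ 1)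
    (S1 S2 : Matrix (Fin ny) (Fin ny) ℝ)
    (h1 : S1.PosSemidef) (h2 : S2.PosSemidef) :
    (α • ((C * G)ᵀ * (Rt A Q C R S1)⁻¹ * (C * G))
      + (1 - α) • ((C * G)ᵀ * (Rt A Q C R S2)⁻¹ * (C * G))
      - (C * G)ᵀ * (Rt A Q C R (α • S1 + (1 - α) • S2))⁻¹ * (C * G)).PosSemidef := by
  rw [Rt_affine]
  exact inv_congr_convex _ _ _ (Rt_posDef hQ hR h1) (Rt_posDef hQ hR h2) hα0 hα1
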